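/- If for each t = 1,...,T the Wasserstein-1 distance between the marginal distributions P_t(X_t) and P_{t-1}(X_{t-1}) is at most ε_t (with cost c_x), and the conditional label distributions satisfy W(P_t(Y|X=x_t), P_{t-1}(Y|X=x_{t-1})) ≤ L_t · c_x(x_t, x_{t-1}) for all x_t, x_{t-1}, then the Wasserstein-1 distance between the joint distributions, with respect to the separable cost c((x,y),(x',y')) = c_x(x,x') + c_y(y,y'), satisfies W(P_t(X_t,Y_t), P_{t-1}(X_{t-1},Y_{t-1})) ≤ (1 + L_t)·ε_t. -/

import Mathlib

open BigOperators Finset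

/-- A probability vector on a finite type. -/
def IsProbVec {Z : Type*} [Fintype Z] (p : Z → ℝ) : Prop :=
  (∀ z, 0 ≤ p z) ∧ ∑ z, p z = 1

/-- A coupling of two probability vectors on finite types. -/
def IsCoupling {Z W : Type*} [Fintype Z] [Fintype W]
    (γ : Z → W → ℝ) (p : Z → ℝ) (q : W → ℝ) : Prop :=
  (∀ z w, 0 ≤ γ z w) ∧ (∀ z, ∑ w, γ z w = p z) ∧ (∀ w, ∑ z, γ z w = q w)

/-- Wasserstein-1 distance with cost `c` between probability vectors on a finite type. -/
noncomputable def W1 {Z : Type*} [Fintype Z]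
    (c : Z → Z → ℝ) (p q : Z → ℝ) : ℝ :=
  sInf { r | ∃ γ, IsCoupling γ p q ∧ r = ∑ z, ∑ w, c z w * γ z w }

/-- The `X`-marginal of a joint distribution on `X × Y`. -/
noncomputable def margX {X Y : Type*} [Fintype X] [Fintype Y]
    (μ : X × Y → ℝ) (x : X) : ℝ := ∑ y, μ (x, y)

/-- The conditional label distribution of a joint distribution on `X × Y`. -/
noncomputable def condY {X Y : Type*} [Fintype X] [Fintype Y]
    (μ : X × Y → ℝ) (x : X) (y : Y) : ℝ := μ (x, y) / margX μ x

/- ## Auxiliary lemmas -/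

lemma prodCoupling {Z W : Type*} [Fintype Z] [Fintype W] {p : Z → ℝ} {q : W → ℝ}
    (hp : IsProbVec p) (hq : IsProbVec q) :
    IsCoupling (fun z w => p z * q w) p q := by
  refine ⟨fun z w => mul_nonneg (hp.1 z) (hq.1 w), fun z => ?_, fun w => ?_⟩
  · rw [← Finset.mul_sum, hq.2, mul_one]
  · rw [← Finset.sum_mul, hp.2, one_mul]

lemma W1_mem_nonneg {Z : Type*} [Fintype Z] {c : Z → Z → ℝ} (hc : ∀ z w, 0 ≤ c z w)
    {p q : Z → ℝ} {r : ℝ}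
    (hr : r ∈ { r | ∃ γ, IsCoupling γ p q ∧ r = ∑ z, ∑ w, c z w * γ z w }) : 0 ≤ r := by
  obtain ⟨γ, hγ, rfl⟩ := hr
  exact Finset.sum_nonneg fun z _ => Finset.sum_nonneg fun w _ =>
    mul_nonneg (hc z w) (hγ.1 z w)

lemma W1_bddBelow {Z : Type*} [Fintype Z] {c : Z → Z → ℝ} (hc : ∀ z w, 0 ≤ c z w)
    (p q : Z → ℝ) :
    BddBelow { r | ∃ γ, IsCoupling γ p q ∧ r = ∑ z, ∑ w, c z w * γ z w } :=
  ⟨0, fun _ hr => W1_mem_nonneg hc hr⟩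

lemma W1_le_of_coupling {Z : Type*} [Fintype Z] {c : Z → Z → ℝ} (hc : ∀ z w, 0 ≤ c z w)
    {p q : Z → ℝ} {γ : Z → Z → ℝ} (hγ : IsCoupling γ p q) :
    W1 c p q ≤ ∑ z, ∑ w, c z w * γ z w :=
  csInf_le (W1_bddBelow hc p q) ⟨γ, hγ, rfl⟩

lemma exists_coupling_lt {Z : Type*} [Fintype Z] {c : Z → Z → ℝ} (hc : ∀ z w, 0 ≤ c z w)
    {p q : Z → ℝ} (hp : IsProbVec p) (hq : IsProbVec q) {δ : ℝ} (hδ : 0 < δ) :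
    ∃ γ, IsCoupling γ p q ∧ ∑ z, ∑ w, c z w * γ z w < W1 c p q + δ := by
  have hne : ({ r | ∃ γ, IsCoupling γ p q ∧ r = ∑ z, ∑ w, c z w * γ z w } : Set ℝ).Nonempty :=
    ⟨_, ⟨_, prodCoupling hp hq, rfl⟩⟩
  have hlt : W1 c p q < W1 c p q + δ := lt_add_of_pos_right _ hδ
  obtain ⟨r, hrmem, hr⟩ := exists_lt_of_csInf_lt hne hlt
  obtain ⟨γ, hγ, rfl⟩ := hrmem
  exact ⟨γ, hγ, hr⟩

lemma margX_probVec {X Y : Type*} [Fintype X] [Fintype Y] {μ : X × Y → ℝ}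
    (hμ : IsProbVec μ) : IsProbVec (margX μ) := by
  refine ⟨fun x => Finset.sum_nonneg fun y _ => hμ.1 _, ?_⟩
  rw [← hμ.2, Fintype.sum_prod_type]
  rfl

lemma condY_probVec {X Y : Type*} [Fintype X] [Fintype Y] {μ : X × Y → ℝ}
    (hμ : IsProbVec μ) {x : X} (hx : 0 < margX μ x) : IsProbVec (condY μ x) := by
  refine ⟨fun y => div_nonneg (hμ.1 _) hx.le, ?_⟩
  unfold condY
  rw [← Finset.sum_div]
  exact div_self hx.ne'

/-- Gradual Lipschitz smoothness implies gradualness of the joint shift: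
if the Wasserstein distance of the input marginals is at most `ε` and the conditional
label distributions are `L`-Lipschitz in the input cost, then the Wasserstein distance
of the joints (for the separable cost) is at most `(1 + L) * ε`. Here `μ` plays the
role of `P_t` and `ν` the role of `P_{t-1}`. -/
theorem gradually_lipschitz_smooth_implies_gradual
    {X Y : Type*} [Fintype X] [Fintype Y]
    (cx : X → X → ℝ) (cy : Y → Y → ℝ)
    (hcx : ∀ x x', 0 ≤ cx x x') (hcy : ∀ y y', 0 ≤ cy y y')
    (μ ν : X × Y → ℝ) (hμ : IsProbVec μ) (hν : IsProbVec ν)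
    (hμpos : ∀ x, 0 < margX μ x) (hνpos : ∀ x, 0 < margX ν x)
    (L ε : ℝ) (hL : 0 < L)
    (hW : W1 cx (margX μ) (margX ν) ≤ ε)
    (hLip : ∀ x x', W1 cy (condY μ x) (condY ν x') ≤ L * cx x x') :
    W1 (fun p q : X × Y => cx p.1 q.1 + cy p.2 q.2) μ ν ≤ (1 + L) * ε := by
  have hμm : IsProbVec (margX μ) := margX_probVec hμ
  have hνm : IsProbVec (margX ν) := margX_probVec hν
  have hcμ : ∀ x, IsProbVec (condY μ x) := fun x => condY_probVec hμ (hμpos x)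
  have hcν : ∀ x, IsProbVec (condY ν x) := fun x => condY_probVec hν (hνpos x)
  refine le_of_forall_pos_le_add fun δ hδ => ?_
  set δ' : ℝ := δ / (2 + L) with hδ'def
  have hδ' : 0 < δ' := div_pos hδ (by linarith)
  -- near-optimal coupling of the marginals
  obtain ⟨γx, hγx, hγxc⟩ := exists_coupling_lt hcx hμm hνm hδ'
  -- near-optimal couplings of the conditionals
  have hch : ∀ x x', ∃ γy, IsCoupling γy (condY μ x) (condY ν x') ∧
      ∑ y, ∑ y', cy y y' * γy y y' < L * cx x x' + δ' := by
    intro x x'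
    obtain ⟨γy, hγy, hlt⟩ := exists_coupling_lt hcy (hcμ x) (hcν x') hδ'
    exact ⟨γy, hγy, hlt.trans_le (add_le_add_left (hLip x x') δ')⟩
  choose g hg1 hg2 using hch
  -- the glued joint coupling
  set Γ : X × Y → X × Y → ℝ := fun p q => γx p.1 q.1 * g p.1 q.1 p.2 q.2 with hΓdef
  have hΓ : IsCoupling Γ μ ν := by
    refine ⟨fun z w => mul_nonneg (hγx.1 _ _) ((hg1 _ _).1 _ _), ?_, ?_⟩
    · rintro ⟨x, y⟩
      rw [Fintype.sum_prod_type]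
      have h1 : ∀ x', ∑ y', Γ (x, y) (x', y') = γx x x' * condY μ x y := by
        intro x'
        simp only [hΓdef]
        rw [← Finset.mul_sum, (hg1 x x').2.1 y]
      rw [Finset.sum_congr rfl fun x' _ => h1 x', ← Finset.sum_mul, hγx.2.1 x]
      rw [condY, mul_comm, div_mul_cancel₀ _ (hμpos x).ne']
    · rintro ⟨x', y'⟩
      rw [Fintype.sum_prod_type]
      have h1 : ∀ x, ∑ y, Γ (x, y) (x', y') = γx x x' * condY ν x' y' := by
        intro x
        simp only [hΓdef]
        rw [← Finset.mul_sum, (hg1 x x').2.2 y']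
      rw [Finset.sum_congr rfl fun x _ => h1 x, ← Finset.sum_mul, hγx.2.2 x']
      rw [condY, mul_comm, div_mul_cancel₀ _ (hνpos x').ne']
  -- the cost of the glued coupling
  have hWle : W1 (fun p q : X × Y => cx p.1 q.1 + cy p.2 q.2) μ ν ≤
      ∑ z, ∑ w, (cx z.1 w.1 + cy z.2 w.2) * Γ z w :=
    W1_le_of_coupling (fun z w => add_nonneg (hcx _ _) (hcy _ _)) hΓ
  have hreorg : ∑ z, ∑ w, (cx z.1 w.1 + cy z.2 w.2) * Γ z w
      = ∑ x, ∑ x', ∑ y, ∑ y', (cx x x' + cy y y') * (γx x x' * g x x' y y') := by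
    simp only [Fintype.sum_prod_type, hΓdef]
    exact Finset.sum_congr rfl fun x _ => Finset.sum_comm
  have inner : ∀ x x', ∑ y, ∑ y', (cx x x' + cy y y') * (γx x x' * g x x' y y')
      ≤ γx x x' * ((1 + L) * cx x x' + δ') := by
    intro x x'
    have hgsum : ∑ y, ∑ y', g x x' y y' = 1 := by
      rw [Finset.sum_congr rfl fun y _ => (hg1 x x').2.1 y]
      exact (hcμ x).2
    have hexp : ∑ y, ∑ y', (cx x x' + cy y y') * (γx x x' * g x x' y y')
        = cx x x' * γx x x' * (∑ y, ∑ y', g x x' y y')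
          + γx x x' * ∑ y, ∑ y', cy y y' * g x x' y y' := by
      rw [Finset.mul_sum, Finset.mul_sum, ← Finset.sum_add_distrib]
      refine Finset.sum_congr rfl fun y _ => ?_
      rw [Finset.mul_sum, Finset.mul_sum, ← Finset.sum_add_distrib]
      exact Finset.sum_congr rfl fun y' _ => by ring
    rw [hexp, hgsum, mul_one]
    have h2 := (hg2 x x').le
    have h3 := hγx.1 x x'
    nlinarith [mul_le_mul_of_nonneg_left h2 h3]
  have hγxsum : ∑ x, ∑ x', γx x x' = 1 := by
    rw [Finset.sum_congr rfl fun x _ => hγx.2.1 x]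
    exact hμm.2
  have hfinal : ∑ x, ∑ x', γx x x' * ((1 + L) * cx x x' + δ')
      = (1 + L) * (∑ x, ∑ x', cx x x' * γx x x') + δ' * (∑ x, ∑ x', γx x x') := by
    rw [Finset.mul_sum, Finset.mul_sum, ← Finset.sum_add_distrib]
    refine Finset.sum_congr rfl fun x _ => ?_
    rw [Finset.mul_sum, Finset.mul_sum, ← Finset.sum_add_distrib]
    exact Finset.sum_congr rfl fun x' _ => by ring
  have hcostx : ∑ x, ∑ x', cx x x' * γx x x' ≤ ε + δ' :=
    le_of_lt (hγxc.trans_le (by linarith))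
  have hδeq : (1 + L) * δ' + δ' + (1 + L) * δ' - (1 + L) * δ' = (2 + L) * δ' := by ring
  calc W1 (fun p q : X × Y => cx p.1 q.1 + cy p.2 q.2) μ ν
      ≤ ∑ x, ∑ x', ∑ y, ∑ y', (cx x x' + cy y y') * (γx x x' * g x x' y y') := by
        rw [← hreorg]; exact hWle
    _ ≤ ∑ x, ∑ x', γx x x' * ((1 + L) * cx x x' + δ') :=
        Finset.sum_le_sum fun x _ => Finset.sum_le_sum fun x' _ => inner x x'
    _ = (1 + L) * (∑ x, ∑ x', cx x x' * γx x x') + δ' * (∑ x, ∑ x', γx x x') := hfinal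
    _ ≤ (1 + L) * (ε + δ') + δ' * 1 := by
        rw [hγxsum]
        have : (1 + L) * (∑ x, ∑ x', cx x x' * γx x x') ≤ (1 + L) * (ε + δ') :=
          mul_le_mul_of_nonneg_left hcostx (by linarith)
        linarith
    _ ≤ (1 + L) * ε + δ := by
        have : (2 + L) * δ' = δ := by
          rw [hδ'def]; field_simp
        nlinarith
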